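/- Let f be a positive integer and d a positive divisor of f. The map δ_d sending S to {x/d : x ∈ L(S)} ∪ (f/d, ∞) is a bijection from N_f(d) (numerical semigroups with Frobenius number f and gcd of extended left elements equal to d) to N_{f/d}(1) (numerical semigroups with Frobenius number f/d and gcd of extended left elements equal to 1). -/
import Mathlib


/-- A numerical semigroup: a cofinite additive submonoid of ℕ containing 0. -/
structure NumericalSemigroup where
  carrier : Set ℕ
  zero_mem : 0 ∈ carrier
  add_mem : ∀ ⦃a b : ℕ⦄, a ∈ carrier → b ∈ carrier → a + b ∈ carrier
  cofinite : (carrierᶜ : Set ℕ).Finite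

namespace NumericalSemigroup

/-- The primitives (minimal generators): nonzero elements not expressible as a sum
of two nonzero elements. -/
def primitives (S : NumericalSemigroup) : Set ℕ :=
  {x | x ∈ S.carrier ∧ x ≠ 0 ∧
    ¬ ∃ a b : ℕ, a ∈ S.carrier ∧ b ∈ S.carrier ∧ a ≠ 0 ∧ b ≠ 0 ∧ x = a + b}

/-- The maximum primitive. -/
noncomputable def maxPrim (S : NumericalSemigroup) : ℕ := sSup (primitives S)

/-- The multiplicity: the least primitive (= least nonzero element). -/
noncomputable def multiplicity (S : NumericalSemigroup) : ℕ := sInf (primitives S)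

/-- The Frobenius number: the largest gap (0 for ℕ by convention here). -/
noncomputable def frob (S : NumericalSemigroup) : ℕ := sSup (S.carrierᶜ)

/-- The set of left elements. -/
noncomputable def lefts (S : NumericalSemigroup) : Set ℕ := S.carrier ∩ Set.Iio (frob S)

/-- The extended set of left elements. -/
noncomputable def extLefts (S : NumericalSemigroup) : Set ℕ := lefts S ∪ {frob S}

end NumericalSemigroup

open NumericalSemigroup

/-- The gcd of a set of naturals: the greatest common divisor of all its elements. -/
noncomputable def setGcd (A : Set ℕ) : ℕ := sSup {d | ∀ x ∈ A, d ∣ x}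

/-- The number of numerical semigroups with maximum primitive `n`. -/
noncomputable def countMaxPrim (n : ℕ) : ℕ :=
  {S : NumericalSemigroup | maxPrim S = n}.ncard

/-- The number of numerical semigroups with Frobenius number `n`. -/
noncomputable def countFrob (n : ℕ) : ℕ :=
  {S : NumericalSemigroup | frob S = n}.ncard

theorem NS.ext' {S T : NumericalSemigroup} (h : S.carrier = T.carrier) : S = T := by
  cases S; cases T; simpa using h

theorem frob_notMem {S : NumericalSemigroup} (h : 0 < frob S) : frob S ∉ S.carrier := by
  have hne : (S.carrierᶜ).Nonempty := by
    by_contra hc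
    rw [Set.not_nonempty_iff_eq_empty] at hc
    rw [frob, hc, csSup_empty] at h
    exact lt_irrefl 0 h
  exact Nat.sSup_mem hne S.cofinite.bddAbove

theorem mem_of_frob_lt {S : NumericalSemigroup} {x : ℕ} (h : frob S < x) : x ∈ S.carrier := by
  by_contra hc
  have : x ≤ frob S := le_csSup S.cofinite.bddAbove hc
  omega

theorem frob_eq_of {S : NumericalSemigroup} {f : ℕ} (h1 : f ∉ S.carrier)
    (h2 : ∀ x, f < x → x ∈ S.carrier) : frob S = f := by
  apply le_antisymm
  · apply csSup_le ⟨f, h1⟩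
    intro b hb
    by_contra hc
    exact hb (h2 b (by omega))
  · exact le_csSup S.cofinite.bddAbove h1

theorem carrier_eq {S : NumericalSemigroup} (h : 0 < frob S) :
    S.carrier = lefts S ∪ Set.Ioi (frob S) := by
  ext x
  constructor
  · intro hx
    rcases lt_trichotomy x (frob S) with h1 | h1 | h1
    · exact Or.inl ⟨hx, h1⟩
    · exact absurd hx (h1 ▸ frob_notMem h)
    · exact Or.inr h1
  · rintro (⟨hx, _⟩ | hx)
    · exact hx
    · exact mem_of_frob_lt hx

theorem setGcd_dvd {A : Set ℕ} {a : ℕ} (ha : a ∈ A) (h0 : 0 < a) :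
    ∀ x ∈ A, setGcd A ∣ x := by
  have hbdd : BddAbove {d | ∀ x ∈ A, d ∣ x} :=
    ⟨a, fun e he => Nat.le_of_dvd h0 (he a ha)⟩
  have hne : {d | ∀ x ∈ A, d ∣ x}.Nonempty := ⟨1, fun x _ => one_dvd x⟩
  exact Nat.sSup_mem hne hbdd

theorem le_setGcd {A : Set ℕ} {a : ℕ} (ha : a ∈ A) (h0 : 0 < a)
    {e : ℕ} (he : ∀ x ∈ A, e ∣ x) : e ≤ setGcd A :=
  le_csSup ⟨a, fun e' he' => Nat.le_of_dvd h0 (he' a ha)⟩ he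

theorem setGcd_eq {A : Set ℕ} {a : ℕ} (ha : a ∈ A) (h0 : 0 < a)
    {d : ℕ} (hd : ∀ x ∈ A, d ∣ x) (hmax : ∀ e, (∀ x ∈ A, e ∣ x) → e ≤ d) :
    setGcd A = d :=
  le_antisymm (csSup_le ⟨1, fun x _ => one_dvd x⟩ fun e he => hmax e he)
    (le_setGcd ha h0 hd)

def glue (A : Set ℕ) (f : ℕ) (h0 : 0 ∈ A)
    (hadd : ∀ a ∈ A, ∀ b ∈ A, a + b ∈ A ∨ f < a + b) : NumericalSemigroup where
  carrier := A ∪ Set.Ioi f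
  zero_mem := Or.inl h0
  add_mem := by
    rintro a b (ha | ha) (hb | hb)
    · exact hadd a ha b hb
    · right; simp only [Set.mem_Ioi] at *; omega
    · right; simp only [Set.mem_Ioi] at *; omega
    · right; simp only [Set.mem_Ioi] at *; omega
  cofinite := (Set.finite_Iic f).subset (by
    intro x hx
    simp only [Set.mem_compl_iff, Set.mem_union, Set.mem_Ioi, not_or, not_lt] at hx
    exact hx.2)

theorem glue_frob {A : Set ℕ} {f : ℕ} (h0 : 0 ∈ A)
    (hadd : ∀ a ∈ A, ∀ b ∈ A, a + b ∈ A ∨ f < a + b)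
    (hlt : ∀ x ∈ A, x < f) (hf : 0 < f) :
    frob (glue A f h0 hadd) = f := by
  apply frob_eq_of
  · rintro (hc | hc)
    · exact absurd (hlt f hc) (lt_irrefl f)
    · exact absurd hc (by simp)
  · intro x hx; exact Or.inr hx

theorem glue_lefts {A : Set ℕ} {f : ℕ} (h0 : 0 ∈ A)
    (hadd : ∀ a ∈ A, ∀ b ∈ A, a + b ∈ A ∨ f < a + b)
    (hlt : ∀ x ∈ A, x < f) (hf : 0 < f) :
    lefts (glue A f h0 hadd) = A := by
  unfold lefts
  rw [glue_frob h0 hadd hlt hf]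
  show (A ∪ Set.Ioi f) ∩ Set.Iio f = A
  ext x
  simp only [Set.mem_inter_iff, Set.mem_union, Set.mem_Ioi, Set.mem_Iio]
  constructor
  · rintro ⟨h1 | h1, h2⟩
    · exact h1
    · omega
  · intro hx; exact ⟨Or.inl hx, hlt x hx⟩

theorem image_div_eq {d : ℕ} (hd : 0 < d) {A : Set ℕ} (hdvd : ∀ x ∈ A, d ∣ x) :
    (fun s => s / d) '' A = {y | d * y ∈ A} := by
  ext y
  simp only [Set.mem_image, Set.mem_setOf_eq]
  constructor
  · rintro ⟨x, hx, rfl⟩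
    obtain ⟨c, rfl⟩ := hdvd x hx
    rwa [Nat.mul_div_cancel_left c hd]
  · intro hy
    exact ⟨d * y, hy, by rw [Nat.mul_div_cancel_left y hd]⟩

theorem image_div_mul {d : ℕ} (hd : 0 < d) (A : Set ℕ) :
    (fun s => s / d) '' ((fun s => d * s) '' A) = A := by
  rw [← Set.image_comp]
  ext x
  simp only [Set.mem_image, Function.comp_apply]
  constructor
  · rintro ⟨y, hy, rfl⟩
    rwa [Nat.mul_div_cancel_left y hd]
  · intro hx
    exact ⟨x, hx, Nat.mul_div_cancel_left x hd⟩

theorem image_mul_div {d : ℕ} (hd : 0 < d) {A : Set ℕ} (hdvd : ∀ x ∈ A, d ∣ x) :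
    (fun s => d * s) '' ((fun s => s / d) '' A) = A := by
  rw [image_div_eq hd hdvd]
  ext x
  simp only [Set.mem_image, Set.mem_setOf_eq]
  constructor
  · rintro ⟨y, hy, rfl⟩
    exact hy
  · intro hx
    obtain ⟨c, rfl⟩ := hdvd x hx
    exact ⟨c, hx, rfl⟩

theorem dvd_of_mem_extLefts {S : NumericalSemigroup} {d : ℕ} (hg : setGcd (extLefts S) = d)
    (hf : 0 < frob S) : ∀ x ∈ extLefts S, d ∣ x := by
  have hmem : frob S ∈ extLefts S := Or.inr rfl
  have := setGcd_dvd hmem hf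
  rwa [hg] at this

section Maps

variable (f d : ℕ)

theorem delta_zero (hf : 0 < f)
    (S : {S : NumericalSemigroup // frob S = f ∧ setGcd (extLefts S) = d}) :
    0 ∈ (fun s => s / d) '' lefts S.1 :=
  ⟨0, ⟨S.1.zero_mem, by simp only [Set.mem_Iio, S.2.1]; exact hf⟩, by simp⟩

theorem delta_dvdL (hf : 0 < f)
    (S : {S : NumericalSemigroup // frob S = f ∧ setGcd (extLefts S) = d}) :
    ∀ x ∈ lefts S.1, d ∣ x := fun x hx =>
  dvd_of_mem_extLefts S.2.2 (by rw [S.2.1]; exact hf) x (Or.inl hx)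

theorem delta_add (hf : 0 < f) (hd : 0 < d) (hdvd : d ∣ f)
    (S : {S : NumericalSemigroup // frob S = f ∧ setGcd (extLefts S) = d}) :
    ∀ a ∈ (fun s => s / d) '' lefts S.1, ∀ b ∈ (fun s => s / d) '' lefts S.1,
      a + b ∈ (fun s => s / d) '' lefts S.1 ∨ f / d < a + b := by
  obtain ⟨m, hm⟩ := hdvd
  have hfd : f / d = m := by rw [hm, Nat.mul_div_cancel_left _ hd]
  rw [image_div_eq hd (delta_dvdL f d hf S)]
  intro a ha b hb
  simp only [Set.mem_setOf_eq] at *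
  have hmul : d * (a + b) ∈ S.1.carrier := by
    rw [mul_add]; exact S.1.add_mem ha.1 hb.1
  rcases lt_trichotomy (d * (a + b)) f with h | h | h
  · exact Or.inl ⟨hmul, by simp only [Set.mem_Iio, S.2.1]; exact h⟩
  · exfalso
    have hn := frob_notMem (S := S.1) (by rw [S.2.1]; exact hf)
    rw [S.2.1] at hn
    exact hn (h ▸ hmul)
  · right
    rw [hfd]
    rw [hm] at h
    exact Nat.lt_of_mul_lt_mul_left h

theorem delta_lt (hf : 0 < f) (hd : 0 < d) (hdvd : d ∣ f)
    (S : {S : NumericalSemigroup // frob S = f ∧ setGcd (extLefts S) = d}) :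
    ∀ y ∈ (fun s => s / d) '' lefts S.1, y < f / d := by
  obtain ⟨m, hm⟩ := hdvd
  have hfd : f / d = m := by rw [hm, Nat.mul_div_cancel_left _ hd]
  rw [image_div_eq hd (delta_dvdL f d hf S)]
  intro y hy
  simp only [Set.mem_setOf_eq] at hy
  have : d * y < f := by
    have := hy.2
    simpa only [Set.mem_Iio, S.2.1] using this
  rw [hfd]
  rw [hm] at this
  exact Nat.lt_of_mul_lt_mul_left this

theorem sigma_zero (hf : 0 < f) (hd : 0 < d) (hdvd : d ∣ f)
    (R : {R : NumericalSemigroup // frob R = f / d ∧ setGcd (extLefts R) = 1}) :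
    0 ∈ (fun s => d * s) '' lefts R.1 :=
  ⟨0, ⟨R.1.zero_mem, by
    simp only [Set.mem_Iio, R.2.1]
    exact Nat.div_pos (Nat.le_of_dvd hf hdvd) hd⟩, by simp⟩

theorem sigma_add (hf : 0 < f) (hd : 0 < d) (hdvd : d ∣ f)
    (R : {R : NumericalSemigroup // frob R = f / d ∧ setGcd (extLefts R) = 1}) :
    ∀ a ∈ (fun s => d * s) '' lefts R.1, ∀ b ∈ (fun s => d * s) '' lefts R.1,
      a + b ∈ (fun s => d * s) '' lefts R.1 ∨ f < a + b := by
  obtain ⟨m, hm⟩ := hdvd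
  have hfd : f / d = m := by rw [hm, Nat.mul_div_cancel_left _ hd]
  have hm0 : 0 < m := by
    rcases Nat.eq_zero_or_pos m with h | h
    · rw [h, mul_zero] at hm; omega
    · exact h
  rintro a ⟨y1, hy1, rfl⟩ b ⟨y2, hy2, rfl⟩
  have hmem : y1 + y2 ∈ R.1.carrier := R.1.add_mem hy1.1 hy2.1
  rcases lt_trichotomy (y1 + y2) m with h | h | h
  · left
    exact ⟨y1 + y2, ⟨hmem, by simp only [Set.mem_Iio, R.2.1, hfd]; exact h⟩, by ring⟩
  · exfalso
    have hn := frob_notMem (S := R.1) (by rw [R.2.1, hfd]; exact hm0)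
    have hfr : (R : NumericalSemigroup).frob = m := by rw [R.2.1]; exact hfd
    apply hn
    rw [hfr, ← h]
    exact hmem
  · right
    calc f = d * m := hm
    _ < d * (y1 + y2) := by nlinarith
    _ = d * y1 + d * y2 := by ring

theorem sigma_lt (hf : 0 < f) (hd : 0 < d) (hdvd : d ∣ f)
    (R : {R : NumericalSemigroup // frob R = f / d ∧ setGcd (extLefts R) = 1}) :
    ∀ y ∈ (fun s => d * s) '' lefts R.1, y < f := by
  obtain ⟨m, hm⟩ := hdvd
  have hfd : f / d = m := by rw [hm, Nat.mul_div_cancel_left _ hd]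
  rintro y ⟨x, hx, rfl⟩
  have : x < m := by
    have := hx.2
    simpa only [Set.mem_Iio, R.2.1, hfd] using this
  rw [hm]
  nlinarith

end Maps

noncomputable def deltaFun (f d : ℕ) (hf : 0 < f) (hd : 0 < d) (hdvd : d ∣ f)
    (S : {S : NumericalSemigroup // frob S = f ∧ setGcd (extLefts S) = d}) :
    {T : NumericalSemigroup // frob T = f / d ∧ setGcd (extLefts T) = 1} :=
  ⟨glue ((fun s => s / d) '' lefts S.1) (f / d) (delta_zero f d hf S)
      (delta_add f d hf hd hdvd S), by
    have hfd0 : 0 < f / d := Nat.div_pos (Nat.le_of_dvd hf hdvd) hd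
    have hfrob := glue_frob (delta_zero f d hf S) (delta_add f d hf hd hdvd S)
      (delta_lt f d hf hd hdvd S) hfd0
    have hlefts := glue_lefts (delta_zero f d hf S) (delta_add f d hf hd hdvd S)
      (delta_lt f d hf hd hdvd S) hfd0
    refine ⟨hfrob, ?_⟩
    have hext : extLefts (glue ((fun s => s / d) '' lefts S.1) (f / d) (delta_zero f d hf S)
        (delta_add f d hf hd hdvd S)) = (fun s => s / d) '' lefts S.1 ∪ {f / d} := by
      unfold extLefts
      rw [hfrob, hlefts]
    rw [hext]
    have hmemf : f / d ∈ (fun s => s / d) '' lefts S.1 ∪ {f / d} := Or.inr rfl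
    apply setGcd_eq hmemf hfd0 (fun x _ => one_dvd x)
    intro e he
    by_contra hgt
    push_neg at hgt
    have hkey : ∀ x ∈ extLefts S.1, d * e ∣ x := by
      rintro x (hx | hx)
      · obtain ⟨c, rfl⟩ := delta_dvdL f d hf S x hx
        have hc : c ∈ (fun s => s / d) '' lefts S.1 := by
          rw [image_div_eq hd (delta_dvdL f d hf S)]
          exact hx
        exact mul_dvd_mul_left d (he c (Or.inl hc))
      · rw [Set.mem_singleton_iff] at hx
        have hx' : x = f := by rw [hx, S.2.1]
        rw [hx']
        obtain ⟨m, hm⟩ := hdvd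
        have hfd : f / d = m := by rw [hm, Nat.mul_div_cancel_left _ hd]
        have : e ∣ m := by
          have := he (f / d) (Or.inr rfl)
          rwa [hfd] at this
        rw [hm]
        exact mul_dvd_mul_left d this
    have hmemF : f ∈ extLefts S.1 := Or.inr (Set.mem_singleton_iff.mpr S.2.1.symm)
    have hle : d * e ≤ setGcd (extLefts S.1) := le_setGcd hmemF hf hkey
    rw [S.2.2] at hle
    nlinarith⟩

noncomputable def sigmaFun (f d : ℕ) (hf : 0 < f) (hd : 0 < d) (hdvd : d ∣ f)
    (R : {R : NumericalSemigroup // frob R = f / d ∧ setGcd (extLefts R) = 1}) :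
    {S : NumericalSemigroup // frob S = f ∧ setGcd (extLefts S) = d} :=
  ⟨glue ((fun s => d * s) '' lefts R.1) f (sigma_zero f d hf hd hdvd R)
      (sigma_add f d hf hd hdvd R), by
    have hfd0 : 0 < f / d := Nat.div_pos (Nat.le_of_dvd hf hdvd) hd
    have hfrob := glue_frob (sigma_zero f d hf hd hdvd R) (sigma_add f d hf hd hdvd R)
      (sigma_lt f d hf hd hdvd R) hf
    have hlefts := glue_lefts (sigma_zero f d hf hd hdvd R) (sigma_add f d hf hd hdvd R)
      (sigma_lt f d hf hd hdvd R) hf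
    refine ⟨hfrob, ?_⟩
    have hext : extLefts (glue ((fun s => d * s) '' lefts R.1) f (sigma_zero f d hf hd hdvd R)
        (sigma_add f d hf hd hdvd R)) = (fun s => d * s) '' lefts R.1 ∪ {f} := by
      unfold extLefts
      rw [hfrob, hlefts]
    rw [hext]
    have hmemf : f ∈ (fun s => d * s) '' lefts R.1 ∪ {f} := Or.inr rfl
    apply setGcd_eq hmemf hf
    · rintro x (⟨y, hy, rfl⟩ | hx)
      · exact Dvd.intro y rfl
      · rw [Set.mem_singleton_iff] at hx
        rw [hx]
        exact hdvd
    · intro e he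
      have hed : e ∣ f := he f (Or.inr rfl)
      have hg0 : 0 < Nat.gcd e d := Nat.gcd_pos_of_pos_right e hd
      have hcop : Nat.Coprime (e / Nat.gcd e d) (d / Nat.gcd e d) :=
        Nat.coprime_div_gcd_div_gcd hg0
      have hstep : ∀ y ∈ extLefts R.1, e / Nat.gcd e d ∣ y := by
        intro y hy
        have hedy : e ∣ d * y := by
          rcases hy with hy | hy
          · exact he (d * y) (Or.inl ⟨y, hy, rfl⟩)
          · rw [Set.mem_singleton_iff] at hy
            rw [hy, R.2.1, Nat.mul_div_cancel' hdvd]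
            exact hed
        have he' : Nat.gcd e d * (e / Nat.gcd e d) = e :=
          Nat.mul_div_cancel' (Nat.gcd_dvd_left e d)
        have hd' : Nat.gcd e d * (d / Nat.gcd e d) = d :=
          Nat.mul_div_cancel' (Nat.gcd_dvd_right e d)
        have h1 : e / Nat.gcd e d ∣ (d / Nat.gcd e d) * y := by
          have h2 : Nat.gcd e d * (e / Nat.gcd e d) ∣ Nat.gcd e d * ((d / Nat.gcd e d) * y) := by
            rw [he', ← mul_assoc, hd']
            exact hedy
          exact (Nat.mul_dvd_mul_iff_left hg0).mp h2
        exact Nat.Coprime.dvd_of_dvd_mul_left hcop h1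
      have hmemR : (R : NumericalSemigroup).frob ∈ extLefts R.1 := Or.inr rfl
      have hposR : 0 < (R : NumericalSemigroup).frob := by rw [R.2.1]; exact hfd0
      have hle : e / Nat.gcd e d ≤ setGcd (extLefts R.1) := le_setGcd hmemR hposR hstep
      rw [R.2.2] at hle
      have heq : Nat.gcd e d * (e / Nat.gcd e d) = e :=
        Nat.mul_div_cancel' (Nat.gcd_dvd_left e d)
      rcases Nat.le_one_iff_eq_zero_or_eq_one.mp hle with h0 | h1
      · rw [h0, mul_zero] at heq
        rw [← heq]
        exact Nat.zero_le d
      · rw [h1, mul_one] at heq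
        rw [← heq]
        exact Nat.le_of_dvd hd (Nat.gcd_dvd_right e d)⟩

theorem sigma_delta (f d : ℕ) (hf : 0 < f) (hd : 0 < d) (hdvd : d ∣ f)
    (S : {S : NumericalSemigroup // frob S = f ∧ setGcd (extLefts S) = d}) :
    sigmaFun f d hf hd hdvd (deltaFun f d hf hd hdvd S) = S := by
  apply Subtype.ext
  apply NS.ext'
  have hfd0 : 0 < f / d := Nat.div_pos (Nat.le_of_dvd hf hdvd) hd
  show (fun s => d * s) '' lefts (glue ((fun s => s / d) '' lefts S.1) (f / d)
      (delta_zero f d hf S) (delta_add f d hf hd hdvd S)) ∪ Set.Ioi f = S.1.carrier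
  rw [glue_lefts (delta_zero f d hf S) (delta_add f d hf hd hdvd S)
      (delta_lt f d hf hd hdvd S) hfd0]
  rw [image_mul_div hd (delta_dvdL f d hf S)]
  have hc := carrier_eq (S := S.1) (by rw [S.2.1]; exact hf)
  rw [hc, S.2.1]

theorem delta_sigma (f d : ℕ) (hf : 0 < f) (hd : 0 < d) (hdvd : d ∣ f)
    (R : {R : NumericalSemigroup // frob R = f / d ∧ setGcd (extLefts R) = 1}) :
    deltaFun f d hf hd hdvd (sigmaFun f d hf hd hdvd R) = R := by
  apply Subtype.ext
  apply NS.ext'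
  have hfd0 : 0 < f / d := Nat.div_pos (Nat.le_of_dvd hf hdvd) hd
  show (fun s => s / d) '' lefts (glue ((fun s => d * s) '' lefts R.1) f
      (sigma_zero f d hf hd hdvd R) (sigma_add f d hf hd hdvd R)) ∪ Set.Ioi (f / d)
      = R.1.carrier
  rw [glue_lefts (sigma_zero f d hf hd hdvd R) (sigma_add f d hf hd hdvd R)
      (sigma_lt f d hf hd hdvd R) hf]
  rw [image_div_mul hd]
  have hc := carrier_eq (S := R.1) (by rw [R.2.1]; exact hfd0)
  rw [hc, R.2.1]

theorem delta_bijective (f d : ℕ) (hf : 0 < f) (hd : 0 < d) (hdvd : d ∣ f) :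
    ∃ e : {S : NumericalSemigroup // frob S = f ∧ setGcd (extLefts S) = d} ≃
          {S : NumericalSemigroup // frob S = f / d ∧ setGcd (extLefts S) = 1},
      ∀ S, (e S).1.carrier
          = (fun s => s / d) '' lefts S.1 ∪ Set.Ioi (f / d) := by
  exact ⟨⟨deltaFun f d hf hd hdvd, sigmaFun f d hf hd hdvd,
    sigma_delta f d hf hd hdvd, delta_sigma f d hf hd hdvd⟩, fun S => rfl⟩
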